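/- arXiv:1410.5398 — 2 statements merged into one kernel-verified Lean document; each statement's English description precedes it below -/
import Mathlib

section
/- Let 1 ≤ p < d, let U be a real d × p matrix and V a real d × (d−p) matrix such that the d × d matrix [U V] is invertible, let Δ := {y ∈ ℝ^p : there exists λ ∈ ℝ^{d−p} with ‖Uy + Vλ‖∞ ≤ 1}, and for y ∈ ℝ^p let Q_y := {λ ∈ ℝ^{d−p} : ‖Uy + Vλ‖∞ ≤ 1} and 𝒱(y) := the (d−p)-dimensional Lebesgue measure of Q_y. Then the map 𝒱 restricted to Δ is continuous, i.e., 𝒱 : Δ → [0, ∞) is a continuous function on the compact set Δ. -/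
open MeasureTheory Filter Set Topology

private lemma hyperplane_null {m : ℕ} (v : Fin m → ℝ) (hv : v ≠ 0) (c : ℝ) :
    volume {l : Fin m → ℝ | ∑ k, v k * l k = c} = 0 := by
  classical
  obtain ⟨k₀, hk₀⟩ : ∃ k, v k ≠ 0 := by
    by_contra h; push_neg at h; exact hv (funext fun k => h k)
  set φ : (Fin m → ℝ) →ₗ[ℝ] ℝ :=
    { toFun := fun l => ∑ k, v k * l k
      map_add' := fun a b => by simp [mul_add, Finset.sum_add_distrib]
      map_smul' := fun r a => by simp [Finset.mul_sum, mul_left_comm] } with hφdef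
  have hker : LinearMap.ker φ ≠ ⊤ := by
    intro h
    have h0 : φ = 0 := LinearMap.ker_eq_top.mp h
    have : φ (Pi.single k₀ 1) = v k₀ := by
      simp [hφdef, Pi.single_apply, mul_ite, Finset.sum_ite_eq']
    rw [h0] at this
    exact hk₀ (by simpa using this.symm)
  set l₀ : Fin m → ℝ := Pi.single k₀ (c / v k₀) with hl₀def
  have hl₀ : φ l₀ = c := by
    simp [hφdef, hl₀def, Pi.single_apply, mul_ite, Finset.sum_ite_eq']
    field_simp
  have hset : (fun x => x + l₀) ⁻¹' {l : Fin m → ℝ | ∑ k, v k * l k = c}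
      = (LinearMap.ker φ : Set (Fin m → ℝ)) := by
    ext x
    constructor
    · intro h
      have hx : φ (x + l₀) = c := h
      rw [map_add, hl₀] at hx
      have : φ x = 0 := by linarith
      exact this
    · intro h
      have hx : φ x = 0 := h
      have : φ (x + l₀) = c := by rw [map_add, hl₀, hx, zero_add]
      exact this
  calc volume {l : Fin m → ℝ | ∑ k, v k * l k = c}
      = volume ((fun x => x + l₀) ⁻¹' {l : Fin m → ℝ | ∑ k, v k * l k = c}) :=
        (measure_preimage_add_right volume l₀ _).symm
    _ = volume (LinearMap.ker φ : Set (Fin m → ℝ)) := by rw [hset]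
    _ = 0 := Measure.addHaar_submodule volume _ hker

private lemma abs_apply_le {n : ℕ} (z : Fin n → ℝ) (i : Fin n) : |z i| ≤ ‖z‖ := by
  simpa [Real.norm_eq_abs] using norm_le_pi_norm z i

/-- With `U, V` as in Statement 6, the map
`𝒱(y) := Leb_{d−p}(Q_y)` is continuous on the compact set `Δ`. -/
theorem stmt_7 (d p : ℕ) (hp : 1 ≤ p) (hpd : p < d)
    (U : Matrix (Fin d) (Fin p) ℝ) (V : Matrix (Fin d) (Fin (d - p)) ℝ)
    (hUV : IsUnit ((Matrix.fromCols U V).submatrix id fun j : Fin d =>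
      finSumFinEquiv.symm (Fin.cast (by omega : d = p + (d - p)) j)).det) :
    ContinuousOn
      (fun y : Fin p → ℝ =>
        (volume {l : Fin (d - p) → ℝ | ‖U.mulVec y + V.mulVec l‖ ≤ 1}).toReal)
      {y : Fin p → ℝ | ∃ l : Fin (d - p) → ℝ, ‖U.mulVec y + V.mulVec l‖ ≤ 1} := by
  classical
  have hd : d = p + (d - p) := by omega
  set Q : (Fin p → ℝ) → Set (Fin (d - p) → ℝ) :=
    fun y => {l | ‖U.mulVec y + V.mulVec l‖ ≤ 1} with hQdef
  set Δ : Set (Fin p → ℝ) := {y | ∃ l, ‖U.mulVec y + V.mulVec l‖ ≤ 1} with hΔdef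
  set e : Fin d ≃ (Fin p ⊕ Fin (d - p)) := (finCongr hd).trans finSumFinEquiv.symm with he
  set A : Matrix (Fin d) (Fin d) ℝ :=
    (Matrix.fromCols U V).submatrix id (fun j : Fin d => e j) with hAdef
  have hAunit : IsUnit A.det := hUV
  -- key identity
  have key : ∀ (y : Fin p → ℝ) (l : Fin (d - p) → ℝ),
      A.mulVec (Sum.elim y l ∘ e) = U.mulVec y + V.mulVec l := by
    intro y l
    have h1 : A.mulVec (Sum.elim y l ∘ e)
        = ((Matrix.fromCols U V).mulVec ((Sum.elim y l ∘ e) ∘ e.symm)) ∘ id :=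
      Matrix.submatrix_mulVec_equiv _ _ _ _
    have h2 : (Sum.elim y l ∘ e) ∘ e.symm = Sum.elim y l := by
      funext k; simp
    rw [h1, h2]
    simp [Matrix.fromCols_mulVec_sumElim]
  -- uniform bound on Q y
  obtain ⟨c, hc0, hcb⟩ : ∃ c : ℝ, 0 ≤ c ∧ ∀ (y : Fin p → ℝ) (l : Fin (d - p) → ℝ),
      ‖U.mulVec y + V.mulVec l‖ ≤ 1 → ‖l‖ ≤ c := by
    refine ⟨∑ k : Fin (d - p), ∑ j : Fin d, |A⁻¹ (e.symm (Sum.inr k)) j|, ?_, ?_⟩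
    · positivity
    · intro y l hyl
      have hw : Sum.elim y l ∘ e = A⁻¹.mulVec (U.mulVec y + V.mulVec l) := by
        rw [← key y l, Matrix.mulVec_mulVec, Matrix.nonsing_inv_mul A hAunit,
          Matrix.one_mulVec]
      rw [pi_norm_le_iff_of_nonneg (by positivity)]
      intro k
      have hlk : l k = (A⁻¹.mulVec (U.mulVec y + V.mulVec l)) (e.symm (Sum.inr k)) := by
        have := congrFun hw (e.symm (Sum.inr k))
        simpa using this
      have habs : |l k| ≤ ∑ j : Fin d, |A⁻¹ (e.symm (Sum.inr k)) j| := by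
        rw [hlk]
        calc |∑ j, A⁻¹ (e.symm (Sum.inr k)) j * (U.mulVec y + V.mulVec l) j|
            ≤ ∑ j, |A⁻¹ (e.symm (Sum.inr k)) j * (U.mulVec y + V.mulVec l) j| :=
              Finset.abs_sum_le_sum_abs _ _
          _ ≤ ∑ j, |A⁻¹ (e.symm (Sum.inr k)) j| := by
              refine Finset.sum_le_sum fun j _ => ?_
              rw [abs_mul]
              have : |(U.mulVec y + V.mulVec l) j| ≤ 1 :=
                le_trans (abs_apply_le _ j) hyl
              nlinarith [abs_nonneg (A⁻¹ (e.symm (Sum.inr k)) j)]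
      refine le_trans ?_ (Finset.single_le_sum
        (f := fun k => ∑ j : Fin d, |A⁻¹ (e.symm (Sum.inr k)) j|)
        (fun k _ => by positivity) (Finset.mem_univ k))
      simpa [Real.norm_eq_abs] using habs
  have hQball : ∀ y : Fin p → ℝ, Q y ⊆ Metric.closedBall 0 c := by
    intro y l hl
    rw [Metric.mem_closedBall, dist_zero_right]
    exact hcb y l hl
  have hQmeas : ∀ y : Fin p → ℝ, MeasurableSet (Q y) := by
    intro y
    have : IsClosed (Q y) := by
      have hcont : Continuous fun l : Fin (d - p) → ℝ => ‖U.mulVec y + V.mulVec l‖ := by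
        refine Continuous.norm (Continuous.add continuous_const ?_)
        exact (Matrix.mulVecLin V).continuous_of_finiteDimensional
      exact isClosed_le hcont continuous_const
    exact this.measurableSet
  -- rewrite as integral of indicator
  have hint : ∀ y : Fin p → ℝ,
      (volume (Q y)).toReal = ∫ l, (Q y).indicator (1 : (Fin (d - p) → ℝ) → ℝ) l := by
    intro y
    rw [integral_indicator_one (hQmeas y)]; rfl
  intro y₀ hy₀
  rw [ContinuousWithinAt]
  have hconv : Tendsto (fun y => ∫ l, (Q y).indicator (1 : (Fin (d - p) → ℝ) → ℝ) l)
      (nhdsWithin y₀ Δ) (𝓝 (∫ l, (Q y₀).indicator (1 : (Fin (d - p) → ℝ) → ℝ) l)) := by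
    refine tendsto_integral_filter_of_dominated_convergence
      ((Metric.closedBall (0 : Fin (d - p) → ℝ) c).indicator (1 : (Fin (d - p) → ℝ) → ℝ))
      ?_ ?_ ?_ ?_
    · exact Eventually.of_forall fun y =>
        (aestronglyMeasurable_const.indicator (hQmeas y))
    · refine Eventually.of_forall fun y => Eventually.of_forall fun l => ?_
      by_cases hl : l ∈ Q y
      · rw [Set.indicator_of_mem hl, Set.indicator_of_mem (hQball y hl)]
        simp
      · rw [Set.indicator_of_notMem hl]
        exact (norm_zero (E := ℝ)).le.trans (Set.indicator_nonneg (fun _ _ => zero_le_one) l)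
    · rw [integrable_indicator_iff measurableSet_closedBall]
      exact integrableOn_const (measure_closedBall_lt_top.ne)
    · -- a.e. pointwise convergence
      have hnull : ∀ᵐ l : Fin (d - p) → ℝ, ∀ i : Fin d,
          (fun k => V i k) ≠ 0 → |(U.mulVec y₀ + V.mulVec l) i| ≠ 1 := by
        rw [MeasureTheory.ae_all_iff]
        intro i
        by_cases hrow : (fun k => V i k) = 0
        · exact Eventually.of_forall fun l h => absurd hrow h
        · have h1 : volume {l : Fin (d - p) → ℝ |
              ∑ k, V i k * l k = 1 - (U.mulVec y₀) i} = 0 :=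
            hyperplane_null _ hrow _
          have h2 : volume {l : Fin (d - p) → ℝ |
              ∑ k, V i k * l k = -1 - (U.mulVec y₀) i} = 0 :=
            hyperplane_null _ hrow _
          have : volume ({l : Fin (d - p) → ℝ |
              ∑ k, V i k * l k = 1 - (U.mulVec y₀) i} ∪
              {l | ∑ k, V i k * l k = -1 - (U.mulVec y₀) i}) = 0 :=
            le_antisymm (le_trans (measure_union_le _ _) (by rw [h1, h2]; simp))
              zero_le
        -- turn measure-zero into ae statement
          refine (MeasureTheory.measure_eq_zero_iff_ae_notMem.mp this).mono fun l hl hrow' => ?_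
          intro habs
          have hVl : (V.mulVec l) i = ∑ k, V i k * l k := rfl
          rcases abs_eq (by norm_num : (0:ℝ) ≤ 1) |>.mp habs with h | h
          · exact hl (Or.inl (by simp only [mem_setOf_eq]; rw [← hVl]; simp only [Pi.add_apply] at h; linarith))
          · exact hl (Or.inr (by simp only [mem_setOf_eq]; rw [← hVl]; simp only [Pi.add_apply] at h; linarith))
      refine hnull.mono fun l hl => ?_
      by_cases hQ0 : l ∈ Q y₀
      · -- eventually l ∈ Q y, indicator eventually 1
        have hev : ∀ᶠ y in nhdsWithin y₀ Δ, l ∈ Q y := by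
          have hall : ∀ i : Fin d, ∀ᶠ y in nhdsWithin y₀ Δ,
              |(U.mulVec y + V.mulVec l) i| ≤ 1 := by
            intro i
            by_cases hrow : (fun k => V i k) = 0
            · refine eventually_nhdsWithin_of_forall fun y hy => ?_
              obtain ⟨l', hl'⟩ := hy
              have hVz : ∀ l'' : Fin (d - p) → ℝ, (V.mulVec l'') i = 0 := by
                intro l''
                have : (V.mulVec l'') i = ∑ k, V i k * l'' k := rfl
                rw [this]
                refine Finset.sum_eq_zero fun k _ => ?_
                have : V i k = 0 := congrFun hrow k
                rw [this, zero_mul]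
              have h1 : |(U.mulVec y + V.mulVec l') i| ≤ 1 :=
                le_trans (abs_apply_le _ i) hl'
              simp only [Pi.add_apply] at h1 ⊢
              rw [hVz l]
              rw [hVz l'] at h1
              exact h1
            · have hlt : |(U.mulVec y₀ + V.mulVec l) i| < 1 := by
                have hle : |(U.mulVec y₀ + V.mulVec l) i| ≤ 1 :=
                  le_trans (abs_apply_le _ i) hQ0
                exact lt_of_le_of_ne hle (hl i hrow)
              have hcont : Continuous fun y : Fin p → ℝ =>
                  |(U.mulVec y + V.mulVec l) i| := by
                refine Continuous.abs ?_
                have : Continuous fun y : Fin p → ℝ => (U.mulVec y) i := by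
                  have := ((Matrix.mulVecLin U).continuous_of_finiteDimensional)
                  exact (continuous_apply i).comp this
                exact this.add continuous_const
              have := (hcont.continuousAt (x := y₀)).tendsto.eventually_lt_const hlt
              exact (this.filter_mono nhdsWithin_le_nhds).mono fun y hy => le_of_lt hy
          have := (Filter.eventually_all (ι := Fin d)).mpr hall
          refine this.mono fun y hy => ?_
          rw [hQdef]
          simp only [mem_setOf_eq]
          rw [pi_norm_le_iff_of_nonneg (by norm_num : (0:ℝ) ≤ 1)]
          intro i
          simpa [Real.norm_eq_abs] using hy i
        have heq : ∀ᶠ y in nhdsWithin y₀ Δ,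
            (Q y₀).indicator (1 : (Fin (d - p) → ℝ) → ℝ) l = (Q y).indicator (1 : (Fin (d - p) → ℝ) → ℝ) l := by
          refine hev.mono fun y hy => ?_
          rw [Set.indicator_of_mem hy, Set.indicator_of_mem hQ0]
        exact Tendsto.congr' heq tendsto_const_nhds
      · -- eventually l ∉ Q y, indicator eventually 0
        obtain ⟨i, hi⟩ : ∃ i : Fin d, 1 < |(U.mulVec y₀ + V.mulVec l) i| := by
          by_contra h
          push_neg at h
          exact hQ0 (by
            rw [hQdef]; simp only [mem_setOf_eq]
            rw [pi_norm_le_iff_of_nonneg (by norm_num : (0:ℝ) ≤ 1)]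
            intro i; simpa [Real.norm_eq_abs] using h i)
        have hcont : Continuous fun y : Fin p → ℝ => |(U.mulVec y + V.mulVec l) i| := by
          refine Continuous.abs ?_
          have : Continuous fun y : Fin p → ℝ => (U.mulVec y) i := by
            have := ((Matrix.mulVecLin U).continuous_of_finiteDimensional)
            exact (continuous_apply i).comp this
          exact this.add continuous_const
        have hev : ∀ᶠ y in nhdsWithin y₀ Δ, l ∉ Q y := by
          have := (hcont.continuousAt (x := y₀)).tendsto.eventually_const_lt hi
          refine (this.filter_mono nhdsWithin_le_nhds).mono fun y hy hmem => ?_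
          have : |(U.mulVec y + V.mulVec l) i| ≤ 1 :=
            le_trans (abs_apply_le _ i) hmem
          linarith
        have heq : ∀ᶠ y in nhdsWithin y₀ Δ,
            (Q y₀).indicator (1 : (Fin (d - p) → ℝ) → ℝ) l = (Q y).indicator (1 : (Fin (d - p) → ℝ) → ℝ) l := by
          refine hev.mono fun y hy => ?_
          rw [Set.indicator_of_notMem hy, Set.indicator_of_notMem hQ0]
        exact Tendsto.congr' heq tendsto_const_nhds
  have h2 : Tendsto (fun y => (volume (Q y)).toReal) (nhdsWithin y₀ Δ)
      (𝓝 ((volume (Q y₀)).toReal)) := by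
    rw [hint y₀]
    exact hconv.congr fun y => (hint y).symm
  exact h2
end

section
/- Let (W, 𝒲, ν) be a σ-finite measure space, α ∈ (0,2), and let f : W × ℤ^d → ℝ be jointly measurable with ∫_W Σ_{u ∈ ℤ^d} |f(v,u)|^α ν(dv) < ∞. For v ∈ W and i ≥ 1, let f_i⁺(v) := sup{c > 0 : #{u ∈ ℤ^d : f⁺(v,u) ≥ c} ≥ i} (with sup ∅ := 0) denote the i-th largest value of the family (f⁺(v,u))_{u ∈ ℤ^d}, and define f_i⁻(v) analogously from (f⁻(v,u))_{u ∈ ℤ^d}. Then for all m ≥ 1 and all y₁, …, y_m > 0, (Leb|_{[-1,1]^d} ⊗ ν_α ⊗ ν)({(t,x,v) ∈ [-1,1]^d × (ℝ∖{0}) × W : for every i ∈ {1,…,m}, #{u ∈ ℤ^d : x f(v,u) > y_i} ≥ i}) = 2^d ∫_W [ min_{1≤i≤m} (f_i⁺(v)/y_i)^α + min_{1≤i≤m} (f_i⁻(v)/y_i)^α ] ν(dv). -/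
open MeasureTheory ENNReal Set

lemma encard_ge_iff {ι : Type*} (s : Set ι) (k : ℕ) :
    (k : ℕ∞) ≤ s.encard ↔ ∃ t : Finset ι, t.card = k ∧ ↑t ⊆ s := by
  constructor
  · intro h
    obtain ⟨t, hts, ht⟩ := Set.exists_subset_encard_eq h
    have hfin : t.Finite := Set.finite_of_encard_eq_coe ht
    refine ⟨hfin.toFinset, ?_, by simpa using hts⟩
    have h2 := hfin.encard_eq_coe_toFinset_card
    rw [h2] at ht
    exact_mod_cast ht
  · rintro ⟨t, rfl, hts⟩
    calc ((t.card : ℕ∞)) = (↑t : Set ι).encard := (Set.encard_coe_eq_coe_finsetCard t).symm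
    _ ≤ s.encard := Set.encard_mono hts

lemma orderstat_iff {ι : Type*} (g : ι → ℝ) (M : ℝ) (hM : ∀ u, g u ≤ M)
    (k : ℕ) (hk : 1 ≤ k) {c : ℝ} (hc : 0 < c) :
    ((k : ℕ∞) ≤ {u | c < g u}.encard) ↔
      c < sSup {c' : ℝ | 0 < c' ∧ (k : ℕ∞) ≤ {u | c' ≤ g u}.encard} := by
  set S := {c' : ℝ | 0 < c' ∧ (k : ℕ∞) ≤ {u | c' ≤ g u}.encard} with hS
  have hbdd : BddAbove S := by
    refine ⟨M, ?_⟩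
    rintro c' ⟨hc', hcard⟩
    have hne : {u | c' ≤ g u}.Nonempty := by
      rw [← Set.one_le_encard_iff_nonempty]
      exact le_trans (by exact_mod_cast hk) hcard
    obtain ⟨u, hu⟩ := hne
    exact hu.trans (hM u)
  constructor
  · intro h
    obtain ⟨t, htc, hts⟩ := (encard_ge_iff _ k).1 h
    have htne : t.Nonempty := Finset.card_pos.1 (htc ▸ hk)
    set c' := t.inf' htne g with hc'
    have hcc' : c < c' := by
      rw [hc', Finset.lt_inf'_iff]
      intro u hu
      exact hts hu
    have hc'S : c' ∈ S := by
      refine ⟨hc.trans hcc', ?_⟩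
      rw [← htc]
      rw [encard_ge_iff]
      exact ⟨t, rfl, fun u hu => Finset.inf'_le g hu⟩
    exact lt_of_lt_of_le hcc' (le_csSup hbdd hc'S)
  · intro h
    have hne : S.Nonempty := by
      by_contra hne
      rw [Set.not_nonempty_iff_eq_empty] at hne
      rw [hne, Real.sSup_empty] at h
      linarith
    obtain ⟨c', hc'S, hcc'⟩ := exists_lt_of_lt_csSup hne h
    refine le_trans hc'S.2 (Set.encard_mono ?_)
    intro u hu
    exact lt_of_lt_of_le hcc' hu

lemma nu_Ioi {α : ℝ} (hα : 0 < α) {b : ℝ} (hb : 0 < b) :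
    (volume.withDensity fun x : ℝ => ENNReal.ofReal (α * |x| ^ (-α - 1))) (Ioi b)
      = ENNReal.ofReal (b ^ (-α)) := by
  rw [withDensity_apply _ measurableSet_Ioi]
  have h1 : ∫⁻ x in Ioi b, ENNReal.ofReal (α * |x| ^ (-α - 1))
      = ∫⁻ x in Ioi b, ENNReal.ofReal (α * x ^ (-α - 1)) := by
    refine setLIntegral_congr_fun measurableSet_Ioi ?_
    intro x hx
    beta_reduce
    rw [abs_of_pos (hb.trans hx)]
  rw [h1]
  have hint : IntegrableOn (fun x : ℝ => α * x ^ (-α - 1)) (Ioi b) := by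
    exact (integrableOn_Ioi_rpow_of_lt (by linarith) hb).const_mul α
  rw [← MeasureTheory.ofReal_integral_eq_lintegral_ofReal hint]
  · congr 1
    rw [integral_const_mul, integral_Ioi_rpow_of_lt (by linarith) hb]
    have : -α - 1 + 1 = -α := by ring
    rw [this]
    field_simp
  · filter_upwards [self_mem_ae_restrict measurableSet_Ioi] with x hx
    have : (0:ℝ) < x := hb.trans hx
    positivity

lemma nu_Iio {α : ℝ} (hα : 0 < α) {b : ℝ} (hb : 0 < b) :
    (volume.withDensity fun x : ℝ => ENNReal.ofReal (α * |x| ^ (-α - 1))) (Iio (-b))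
      = ENNReal.ofReal (b ^ (-α)) := by
  rw [withDensity_apply _ measurableSet_Iio]
  have hmp : MeasurePreserving (fun x : ℝ => -x) volume volume :=
    Measure.measurePreserving_neg _
  have hemb : MeasurableEmbedding (fun x : ℝ => -x) :=
    (Homeomorph.neg ℝ).measurableEmbedding
  have h := hmp.setLIntegral_comp_emb hemb
    (fun x => ENNReal.ofReal (α * |x| ^ (-α - 1))) (Ioi b)
  have himg : (fun x : ℝ => -x) '' Ioi b = Iio (-b) := by
    ext x
    simp only [Set.mem_image, Set.mem_Ioi, Set.mem_Iio]
    constructor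
    · rintro ⟨z, hz, rfl⟩; linarith
    · intro hx; exact ⟨-x, by linarith, by ring⟩
  rw [himg] at h
  rw [← h]
  have h2 : ∫⁻ x in Ioi b, ENNReal.ofReal (α * |(-x)| ^ (-α - 1))
      = ENNReal.ofReal (b ^ (-α)) := by
    have := nu_Ioi hα hb
    rw [withDensity_apply _ measurableSet_Ioi] at this
    rw [← this]
    refine setLIntegral_congr_fun measurableSet_Ioi ?_
    intro x hx
    beta_reduce
    rw [abs_neg]
  exact h2

lemma pos_half {α : ℝ} (hα0 : 0 < α) {ι : Type*} (g : ι → ℝ) (M : ℝ) (hM : ∀ u, g u ≤ M)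
    {m : ℕ} (hm : 1 ≤ m) (y : Fin m → ℝ) (hy : ∀ i, 0 < y i) (Fp : Fin m → ℝ)
    (hFp : ∀ i : Fin m, Fp i = sSup {c : ℝ | 0 < c ∧ ((i : ℕ) + 1 : ℕ∞) ≤ {u | c ≤ max (g u) 0}.encard}) :
    MeasurableSet {x : ℝ | 0 < x ∧ ∀ i : Fin m, ((i : ℕ) + 1 : ℕ∞) ≤ {u | y i < x * g u}.encard} ∧
    (volume.withDensity fun x : ℝ => ENNReal.ofReal (α * |x| ^ (-α - 1)))
      {x : ℝ | 0 < x ∧ ∀ i : Fin m, ((i : ℕ) + 1 : ℕ∞) ≤ {u | y i < x * g u}.encard}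
    = ENNReal.ofReal (⨅ i, (Fp i / y i) ^ α) := by
  have hnem : Nonempty (Fin m) := ⟨⟨0, hm⟩⟩
  have hFnn : ∀ i, 0 ≤ Fp i := by
    intro i
    rw [hFp i]
    exact Real.sSup_nonneg (fun c hc => hc.1.le)
  have hbddrange : BddBelow (Set.range fun i => (Fp i / y i) ^ α) := by
    refine ⟨0, ?_⟩
    rintro z ⟨i, rfl⟩
    exact Real.rpow_nonneg (div_nonneg (hFnn i) (hy i).le) α
  have key : ∀ (x : ℝ), 0 < x → ∀ i : Fin m,
      (((i : ℕ) + 1 : ℕ∞) ≤ {u | y i < x * g u}.encard ↔ y i / x < Fp i) := by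
    intro x hx i
    have hset : {u | y i < x * g u} = {u | y i / x < max (g u) 0} := by
      ext u
      simp only [Set.mem_setOf_eq]
      constructor
      · intro h
        have h2 : y i / x < g u := by rw [div_lt_iff₀ hx]; linarith
        exact h2.trans_le (le_max_left _ _)
      · intro h
        have h2 : y i / x < g u := by
          rcases lt_max_iff.1 h with h' | h'
          · exact h'
          · exact absurd h' (not_lt.2 (div_nonneg (hy i).le hx.le))
        rw [div_lt_iff₀ hx] at h2; linarith
    rw [hset]
    have ho := orderstat_iff (fun u => max (g u) 0) (max M 0)
      (fun u => max_le_max (hM u) le_rfl) ((i : ℕ) + 1)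
      (Nat.succ_le_succ (Nat.zero_le _)) (div_pos (hy i) hx)
    push_cast at ho
    rw [ho, hFp i]
  by_cases hcase : ∀ i, 0 < Fp i
  · obtain ⟨i₀, hi₀⟩ := Finite.exists_max (fun i => y i / Fp i)
    set b := y i₀ / Fp i₀ with hb
    have hbpos : 0 < b := div_pos (hy i₀) (hcase i₀)
    have hPeq : {x : ℝ | 0 < x ∧ ∀ i : Fin m, ((i : ℕ) + 1 : ℕ∞) ≤ {u | y i < x * g u}.encard}
        = Set.Ioi b := by
      ext x
      simp only [Set.mem_setOf_eq, Set.mem_Ioi]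
      constructor
      · rintro ⟨hx, h⟩
        have h2 := (key x hx i₀).1 (h i₀)
        rw [div_lt_iff₀ hx] at h2
        rw [hb, div_lt_iff₀ (hcase i₀)]
        linarith
      · intro hx
        have hx0 : 0 < x := hbpos.trans hx
        refine ⟨hx0, fun i => (key x hx0 i).2 ?_⟩
        have h2 : y i / Fp i < x := lt_of_le_of_lt (hi₀ i) hx
        rw [div_lt_iff₀ (hcase i)] at h2
        rw [div_lt_iff₀ hx0]
        linarith
    have hbpow : b ^ (-α) = (Fp i₀ / y i₀) ^ α := by
      have hz : (0:ℝ) ≤ Fp i₀ / y i₀ := div_nonneg (hFnn i₀) (hy i₀).le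
      have hb' : b = (Fp i₀ / y i₀)⁻¹ := by rw [hb, inv_div]
      rw [hb', Real.rpow_neg (inv_nonneg.2 hz), Real.inv_rpow hz, inv_inv]
    have hmain : (⨅ i, (Fp i / y i) ^ α) = b ^ (-α) := by
      rw [hbpow]
      apply le_antisymm
      · exact ciInf_le hbddrange i₀
      · apply le_ciInf
        intro i
        apply Real.rpow_le_rpow (div_nonneg (hFnn i₀) (hy i₀).le) ?_ hα0.le
        rw [div_le_div_iff₀ (hy i₀) (hy i)]
        have h1 : y i / Fp i ≤ y i₀ / Fp i₀ := hi₀ i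
        rw [div_le_div_iff₀ (hcase i) (hcase i₀)] at h1
        linarith [mul_comm (y i) (Fp i₀), mul_comm (y i₀) (Fp i)]
    refine ⟨hPeq ▸ measurableSet_Ioi, ?_⟩
    rw [hPeq, nu_Ioi hα0 hbpos, hmain]
  · push_neg at hcase
    obtain ⟨i₀, hi₀⟩ := hcase
    have hFi0 : Fp i₀ = 0 := le_antisymm hi₀ (hFnn i₀)
    have hPeq : {x : ℝ | 0 < x ∧ ∀ i : Fin m, ((i : ℕ) + 1 : ℕ∞) ≤ {u | y i < x * g u}.encard}
        = (∅ : Set ℝ) := by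
      ext x
      simp only [Set.mem_setOf_eq, Set.mem_empty_iff_false, iff_false, not_and]
      intro hx h
      have h2 := (key x hx i₀).1 (h i₀)
      rw [hFi0] at h2
      exact absurd h2 (not_lt.2 (div_nonneg (hy i₀).le hx.le))
    have hiInf : (⨅ i, (Fp i / y i) ^ α) = 0 := by
      apply le_antisymm
      · calc (⨅ i, (Fp i / y i) ^ α) ≤ (Fp i₀ / y i₀) ^ α := ciInf_le hbddrange i₀
          _ = 0 := by rw [hFi0, zero_div, Real.zero_rpow hα0.ne']
      · exact Real.iInf_nonneg fun i => Real.rpow_nonneg (div_nonneg (hFnn i) (hy i).le) α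
    rw [hPeq, hiInf]
    simp

lemma nuNegInv {α : ℝ} {s : Set ℝ} (hs : MeasurableSet s) :
    (volume.withDensity fun x : ℝ => ENNReal.ofReal (α * |x| ^ (-α - 1))) ((fun x : ℝ => -x) ⁻¹' s)
      = (volume.withDensity fun x : ℝ => ENNReal.ofReal (α * |x| ^ (-α - 1))) s := by
  have hmp : MeasurePreserving (fun x : ℝ => -x) volume volume := Measure.measurePreserving_neg _
  have hemb : MeasurableEmbedding (fun x : ℝ => -x) := (Homeomorph.neg ℝ).measurableEmbedding
  rw [withDensity_apply _ (hemb.measurable hs), withDensity_apply _ hs]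
  rw [← hmp.setLIntegral_comp_preimage_emb hemb (fun x => ENNReal.ofReal (α * |x| ^ (-α - 1))) s]
  refine setLIntegral_congr_fun (hemb.measurable hs) ?_
  intro x hx
  beta_reduce
  rw [abs_neg]

lemma slice_eval {α : ℝ} (hα0 : 0 < α) {ι : Type*} (g : ι → ℝ) (M : ℝ) (hM : ∀ u, |g u| ≤ M)
    {m : ℕ} (hm : 1 ≤ m) (y : Fin m → ℝ) (hy : ∀ i, 0 < y i) (Fp Fm : Fin m → ℝ)
    (hFp : ∀ i : Fin m, Fp i = sSup {c : ℝ | 0 < c ∧ ((i : ℕ) + 1 : ℕ∞) ≤ {u | c ≤ max (g u) 0}.encard})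
    (hFm : ∀ i : Fin m, Fm i = sSup {c : ℝ | 0 < c ∧ ((i : ℕ) + 1 : ℕ∞) ≤ {u | c ≤ max (-g u) 0}.encard}) :
    (volume.withDensity fun x : ℝ => ENNReal.ofReal (α * |x| ^ (-α - 1)))
      {x : ℝ | x ≠ 0 ∧ ∀ i : Fin m, ((i : ℕ) + 1 : ℕ∞) ≤ {u | y i < x * g u}.encard}
    = ENNReal.ofReal ((⨅ i, (Fp i / y i) ^ α) + (⨅ i, (Fm i / y i) ^ α)) := by
  have hnem : Nonempty (Fin m) := ⟨⟨0, hm⟩⟩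
  have hFpnn : ∀ i, 0 ≤ Fp i := fun i => (hFp i) ▸ Real.sSup_nonneg (fun c hc => hc.1.le)
  have hFmnn : ∀ i, 0 ≤ Fm i := fun i => (hFm i) ▸ Real.sSup_nonneg (fun c hc => hc.1.le)
  have hneg_set : ∀ (x : ℝ) (i : Fin m), {u | y i < -x * -g u} = {u | y i < x * g u} := by
    intro x i; ext u; simp only [Set.mem_setOf_eq, neg_mul_neg]
  obtain ⟨hPmeas, hPval⟩ := pos_half hα0 g M (fun u => (abs_le.1 (hM u)).2) hm y hy Fp hFp
  obtain ⟨hP'meas, hP'val⟩ := pos_half hα0 (fun u => -g u) M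
    (fun u => (abs_le.1 (by rw [abs_neg]; exact hM u)).2) hm y hy Fm hFm
  set P := {x : ℝ | 0 < x ∧ ∀ i : Fin m, ((i : ℕ) + 1 : ℕ∞) ≤ {u | y i < x * g u}.encard} with hP
  set P' := {x : ℝ | 0 < x ∧ ∀ i : Fin m, ((i : ℕ) + 1 : ℕ∞) ≤ {u | y i < x * -g u}.encard} with hP'd
  set N := (fun x : ℝ => -x) ⁻¹' P' with hNd
  have hNval : (volume.withDensity fun x : ℝ => ENNReal.ofReal (α * |x| ^ (-α - 1))) N
      = ENNReal.ofReal (⨅ i, (Fm i / y i) ^ α) := by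
    rw [hNd, nuNegInv hP'meas, hP'val]
  have hNmeas : MeasurableSet N := hP'meas.preimage measurable_neg
  have hsplit : {x : ℝ | x ≠ 0 ∧ ∀ i : Fin m, ((i : ℕ) + 1 : ℕ∞) ≤ {u | y i < x * g u}.encard}
      = P ∪ N := by
    ext x
    simp only [hP, hNd, hP'd, Set.mem_setOf_eq, Set.mem_union, Set.mem_preimage, ne_eq]
    constructor
    · rintro ⟨hx, h⟩
      rcases lt_or_gt_of_ne hx with hneg | hpos
      · right
        refine ⟨by linarith, fun i => ?_⟩
        rw [hneg_set]
        exact h i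
      · left; exact ⟨hpos, h⟩
    · rintro (⟨hx, h⟩ | ⟨hx, h⟩)
      · exact ⟨ne_of_gt hx, h⟩
      · refine ⟨by intro h0; rw [h0] at hx; simp at hx, fun i => ?_⟩
        rw [← hneg_set]
        exact h i
  have hdisj : Disjoint P N := by
    rw [Set.disjoint_left]
    rintro x ⟨hx, -⟩ hxN
    rw [hNd, Set.mem_preimage, hP'd] at hxN
    exact absurd hxN.1 (by linarith)
  rw [hsplit, measure_union hdisj hNmeas, hPval, hNval]
  rw [← ENNReal.ofReal_add]
  · exact Real.iInf_nonneg fun i => Real.rpow_nonneg (div_nonneg (hFpnn i) (hy i).le) α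
  · exact Real.iInf_nonneg fun i => Real.rpow_nonneg (div_nonneg (hFmnn i) (hy i).le) α


lemma measurable_encard_set {ι : Type*} [Countable ι] {β : Type*} [MeasurableSpace β]
    (c : ι → Set β) (hc : ∀ u, MeasurableSet (c u)) (k : ℕ) :
    MeasurableSet {p : β | (k : ℕ∞) ≤ {u | p ∈ c u}.encard} := by
  have h : {p : β | (k : ℕ∞) ≤ {u | p ∈ c u}.encard}
      = ⋃ t : {t : Finset ι // t.card = k}, ⋂ u ∈ (t : Finset ι), c u := by
    ext p
    simp only [Set.mem_setOf_eq, Set.mem_iUnion, Set.mem_iInter, encard_ge_iff]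
    constructor
    · rintro ⟨t, htk, hts⟩
      exact ⟨⟨t, htk⟩, fun u hu => hts hu⟩
    · rintro ⟨⟨t, htk⟩, h⟩
      exact ⟨t, htk, fun u hu => h u hu⟩
  rw [h]
  exact MeasurableSet.iUnion fun t =>
    MeasurableSet.biInter ((t : Finset ι) : Set ι).to_countable (fun u _ => hc u)

lemma bdd_of_tsum {ι : Type*} {α : ℝ} (hα : 0 < α) (g : ι → ℝ)
    (h : ∑' u, ENNReal.ofReal (|g u| ^ α) ≠ ⊤) : ∃ M : ℝ, ∀ u, |g u| ≤ M := by
  have hfin : {u | (1 : ℝ≥0∞) ≤ ENNReal.ofReal (|g u| ^ α)}.Finite :=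
    ENNReal.finite_const_le_of_tsum_ne_top h one_ne_zero
  have hsub : {u | (1 : ℝ) ≤ |g u|} ⊆ {u | (1 : ℝ≥0∞) ≤ ENNReal.ofReal (|g u| ^ α)} := by
    intro u hu
    simp only [Set.mem_setOf_eq] at hu ⊢
    have h1 : (1 : ℝ) ≤ |g u| ^ α := by
      calc (1:ℝ) = 1 ^ α := (Real.one_rpow α).symm
      _ ≤ |g u| ^ α := Real.rpow_le_rpow (by norm_num) hu hα.le
    calc (1 : ℝ≥0∞) = ENNReal.ofReal 1 := by simp
    _ ≤ _ := ENNReal.ofReal_le_ofReal h1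
  have hfin2 := hfin.subset hsub
  refine ⟨1 + ∑ u ∈ hfin2.toFinset, |g u|, fun u => ?_⟩
  by_cases hu : 1 ≤ |g u|
  · have hmem : u ∈ hfin2.toFinset := by simp only [Set.Finite.mem_toFinset, Set.mem_setOf_eq]; exact hu
    have hle := Finset.single_le_sum (f := fun u => |g u|) (fun i _ => abs_nonneg _) hmem
    linarith
  · push_neg at hu
    have hnn : (0:ℝ) ≤ ∑ u ∈ hfin2.toFinset, |g u| := Finset.sum_nonneg fun i _ => abs_nonneg _
    linarith


/-- the joint tail of the order statistics:
`(Leb|_{[-1,1]^d} ⊗ ν_α ⊗ ν)({(t,x,v) : #{u : x f(v,u) > y_i} ≥ i for i = 1,…,m})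
  = 2^d ∫_W [min_i (f_i⁺(v)/y_i)^α + min_i (f_i⁻(v)/y_i)^α] ν(dv)`,
where `f_i⁺(v)` (resp. `f_i⁻(v)`) is the `i`-th largest value of `(f⁺(v,u))_u`
(resp. `(f⁻(v,u))_u`), given by `sup{c > 0 : #{u : f⁺(v,u) ≥ c} ≥ i}` with `sup ∅ = 0`. -/
theorem stmt_13 (d : ℕ) {W : Type*} [MeasurableSpace W] (ν : Measure W)
    [SigmaFinite ν] (α : ℝ) (hα : α ∈ Set.Ioo (0 : ℝ) 2)
    (f : W × (Fin d → ℤ) → ℝ) (hf : Measurable f)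
    (hint : ∫⁻ v, ∑' u : Fin d → ℤ, ENNReal.ofReal (|f (v, u)| ^ α) ∂ν < ⊤)
    (fplus fminus : ℕ → W → ℝ)
    (hfplus : ∀ i v, fplus i v =
      sSup {c : ℝ | 0 < c ∧ (i : ℕ∞) ≤ {u : Fin d → ℤ | c ≤ max (f (v, u)) 0}.encard})
    (hfminus : ∀ i v, fminus i v =
      sSup {c : ℝ | 0 < c ∧ (i : ℕ∞) ≤ {u : Fin d → ℤ | c ≤ max (-f (v, u)) 0}.encard})
    (m : ℕ) (hm : 1 ≤ m) (y : Fin m → ℝ) (hy : ∀ i, 0 < y i) :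
    ((volume.restrict (Set.Icc (-1 : Fin d → ℝ) 1)).prod
        ((volume.withDensity fun x : ℝ => ENNReal.ofReal (α * |x| ^ (-α - 1))).prod ν))
      {tp : (Fin d → ℝ) × ℝ × W | tp.2.1 ≠ 0 ∧
        ∀ i : Fin m, ((i : ℕ) + 1 : ℕ∞) ≤
          {u : Fin d → ℤ | y i < tp.2.1 * f (tp.2.2, u)}.encard}
      = ENNReal.ofReal ((2 : ℝ) ^ d) *
        ∫⁻ v, ENNReal.ofReal
          ((⨅ i : Fin m, (fplus ((i : ℕ) + 1) v / y i) ^ α) +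
           (⨅ i : Fin m, (fminus ((i : ℕ) + 1) v / y i) ^ α)) ∂ν := by
  obtain ⟨hα0, hα2⟩ := hα
  set S : Set (ℝ × W) := {p : ℝ × W | p.1 ≠ 0 ∧ ∀ i : Fin m,
      ((i : ℕ) + 1 : ℕ∞) ≤ {u : Fin d → ℤ | y i < p.1 * f (p.2, u)}.encard} with hSdef
  have hSmeas : MeasurableSet S := by
    have h1 : MeasurableSet {p : ℝ × W | p.1 ≠ 0} :=
      (measurable_fst (measurableSet_singleton (0:ℝ))).compl
    have h2 : ∀ i : Fin m, MeasurableSet {p : ℝ × W |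
        ((i : ℕ) + 1 : ℕ∞) ≤ {u : Fin d → ℤ | y i < p.1 * f (p.2, u)}.encard} := by
      intro i
      have hc : ∀ u : Fin d → ℤ, MeasurableSet {p : ℝ × W | y i < p.1 * f (p.2, u)} :=
        fun u => measurableSet_lt measurable_const
          (measurable_fst.mul (hf.comp (measurable_snd.prodMk measurable_const)))
      have h3 := measurable_encard_set (fun u : Fin d → ℤ =>
        {p : ℝ × W | y i < p.1 * f (p.2, u)}) hc ((i : ℕ) + 1)
      simp only [Nat.cast_add, Nat.cast_one] at h3
      exact h3
    have hSeq : S = {p : ℝ × W | p.1 ≠ 0} ∩ ⋂ i : Fin m, {p : ℝ × W |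
        ((i : ℕ) + 1 : ℕ∞) ≤ {u : Fin d → ℤ | y i < p.1 * f (p.2, u)}.encard} := by
      ext p
      simp only [hSdef, Set.mem_setOf_eq, Set.mem_inter_iff, Set.mem_iInter]
    rw [hSeq]
    exact h1.inter (MeasurableSet.iInter h2)
  have hE : {tp : (Fin d → ℝ) × ℝ × W | tp.2.1 ≠ 0 ∧
        ∀ i : Fin m, ((i : ℕ) + 1 : ℕ∞) ≤
          {u : Fin d → ℤ | y i < tp.2.1 * f (tp.2.2, u)}.encard}
      = Set.univ ×ˢ S := by
    ext tp
    simp only [hSdef, Set.mem_setOf_eq, Set.mem_prod, Set.mem_univ, true_and]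
  rw [hE, Measure.prod_prod, Measure.restrict_apply_univ]
  have hcube : volume (Set.Icc (-1 : Fin d → ℝ) 1) = ENNReal.ofReal ((2 : ℝ) ^ d) := by
    rw [Real.volume_Icc_pi]
    have : ∀ i : Fin d, ENNReal.ofReal ((1 : Fin d → ℝ) i - (-1 : Fin d → ℝ) i)
        = ENNReal.ofReal 2 := by
      intro i
      norm_num
    rw [Finset.prod_congr rfl (fun i _ => this i), Finset.prod_const,
      ← ENNReal.ofReal_pow (by norm_num : (0:ℝ) ≤ 2)]
    simp
  rw [hcube]
  congr 1
  rw [Measure.prod_apply_symm hSmeas]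
  have hmeas_tsum : Measurable fun v =>
      ∑' u : Fin d → ℤ, ENNReal.ofReal (|f (v, u)| ^ α) := by
    apply Measurable.ennreal_tsum
    intro u
    exact ENNReal.measurable_ofReal.comp
      (((hf.comp (measurable_id.prodMk measurable_const)).abs).pow_const α)
  have hae : ∀ᵐ v ∂ν, ∑' u : Fin d → ℤ, ENNReal.ofReal (|f (v, u)| ^ α) ≠ ⊤ := by
    filter_upwards [ae_lt_top hmeas_tsum hint.ne] with v hv
    exact hv.ne
  refine lintegral_congr_ae ?_
  filter_upwards [hae] with v hv
  obtain ⟨M, hM⟩ := bdd_of_tsum hα0 (fun u => f (v, u)) hv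
  have hFp : ∀ i : Fin m, (fun i : Fin m => fplus ((i : ℕ) + 1) v) i
      = sSup {c : ℝ | 0 < c ∧ ((i : ℕ) + 1 : ℕ∞) ≤
          {u : Fin d → ℤ | c ≤ max (f (v, u)) 0}.encard} := by
    intro i
    show fplus ((i : ℕ) + 1) v = _
    rw [hfplus ((i : ℕ) + 1) v]
    norm_cast
  have hFm : ∀ i : Fin m, (fun i : Fin m => fminus ((i : ℕ) + 1) v) i
      = sSup {c : ℝ | 0 < c ∧ ((i : ℕ) + 1 : ℕ∞) ≤
          {u : Fin d → ℤ | c ≤ max (-f (v, u)) 0}.encard} := by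
    intro i
    show fminus ((i : ℕ) + 1) v = _
    rw [hfminus ((i : ℕ) + 1) v]
    norm_cast
  have hslice := slice_eval hα0 (fun u : Fin d → ℤ => f (v, u)) M hM hm y hy
    (fun i : Fin m => fplus ((i : ℕ) + 1) v) (fun i : Fin m => fminus ((i : ℕ) + 1) v)
    hFp hFm
  have hpre : (fun x : ℝ => (x, v)) ⁻¹' S
      = {x : ℝ | x ≠ 0 ∧ ∀ i : Fin m, ((i : ℕ) + 1 : ℕ∞) ≤
          {u : Fin d → ℤ | y i < x * f (v, u)}.encard} := rfl
  rw [hpre, hslice]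
end
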